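/- For every n ≥ 1, the numbers d_n of weighted Motzkin paths of length n with total increment −1 whose proper partial heights are all nonnegative satisfy the recurrence d_n = (1 if n = 1, else 0) + 4·d_{n−1} + Σ_{a+b=n−1} d_a·d_b (with d_0 = 0). Equivalently, the formal power series D := Σ_{n≥1} d_n·z^n ∈ ℤ[[z]] satisfies the functional equation D = z·(1 + 4D + D²). -/

import Mathlib

/-- A weighted Motzkin step: an up step, a down step, or one of four distinguishable
horizontal steps. -/
inductive WStep : Type
  | up : WStep
  | down : WStep
  | h1 : WStep
  | h2 : WStep
  | h3 : WStep
  | h4 : WStep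

/-- The height increment of a weighted Motzkin step. -/
def WStep.inc : WStep → ℤ
  | .up => 1
  | .down => -1
  | _ => 0

/-- The total height increment of a weighted Motzkin path. -/
def hsum (p : List WStep) : ℤ := (p.map WStep.inc).sum

/-- `dnum n` : number of weighted Motzkin paths of length `n` with total increment `-1`
whose proper partial heights (after each step except the last) are all nonnegative. -/
noncomputable def dnum (n : ℕ) : ℕ :=
  Nat.card {p : List WStep // p.length = n ∧ hsum p = -1 ∧
    ∀ i < n, 0 ≤ hsum (p.take i)}

/-- The generating series `D = Σ_{n≥1} d_n z^n`. -/
noncomputable def Dser : PowerSeries ℤ := PowerSeries.mk fun n => (dnum n : ℤ)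

deriving instance DecidableEq for WStep

instance : Fintype WStep where
  elems := {WStep.up, WStep.down, WStep.h1, WStep.h2, WStep.h3, WStep.h4}
  complete := by intro x; cases x <;> simp

def PP (n : ℕ) (p : List WStep) : Prop :=
  p.length = n ∧ hsum p = -1 ∧ ∀ i < n, 0 ≤ hsum (p.take i)

abbrev DP (n : ℕ) := {p : List WStep // PP n p}

lemma dnum_eq (n : ℕ) : dnum n = Nat.card (DP n) := rfl

instance (n : ℕ) : Finite (DP n) := by
  have h : {l : List WStep | l.length = n}.Finite := List.finite_length_eq _ n
  have : Finite {l : List WStep // l.length = n} := h.to_subtype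
  apply Finite.of_injective
    (fun p : DP n => (⟨p.1, p.2.1⟩ : {l : List WStep // l.length = n}))
  intro a b hab
  exact Subtype.ext (by simpa using congrArg Subtype.val hab)

lemma hsum_nil : hsum [] = 0 := rfl

lemma hsum_cons (x : WStep) (t : List WStep) : hsum (x :: t) = x.inc + hsum t := by
  simp [hsum]

lemma hsum_append (a b : List WStep) : hsum (a ++ b) = hsum a + hsum b := by
  simp [hsum]

lemma inc_bounds (x : WStep) : -1 ≤ x.inc ∧ x.inc ≤ 1 := by
  cases x <;> simp [WStep.inc]

lemma exists_hit : ∀ (t : List WStep) (c : ℤ), hsum t ≤ c → c ≤ 0 →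
    ∃ k, hsum (t.take k) = c
  | [], c, h1, h2 => ⟨0, by rw [hsum_nil] at h1; simp only [List.take_nil, hsum_nil]; omega⟩
  | x :: s, c, h1, h2 => by
    rcases eq_or_lt_of_le h2 with h | h
    · exact ⟨0, by simp only [List.take_zero, hsum_nil]; omega⟩
    · rw [hsum_cons] at h1
      have hx := inc_bounds x
      obtain ⟨k, hk⟩ := exists_hit s (c - x.inc) (by omega) (by omega)
      exact ⟨k + 1, by rw [List.take_succ_cons, hsum_cons, hk]; ring⟩

lemma DP_zero_empty : IsEmpty (DP 0) := by
  constructor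
  rintro ⟨p, hl, hs, -⟩
  rw [List.length_eq_zero_iff] at hl
  subst hl
  simp [hsum_nil] at hs

/-- Horizontal step from a label. -/
def hstep : Fin 4 → WStep
  | 0 => .h1
  | 1 => .h2
  | 2 => .h3
  | 3 => .h4

lemma hstep_inc (k : Fin 4) : (hstep k).inc = 0 := by fin_cases k <;> rfl

lemma hstep_injective : Function.Injective hstep := by decide

/-- membership lemmas -/
lemma PP_down : PP 1 [WStep.down] := by
  refine ⟨rfl, by simp [hsum, WStep.inc], ?_⟩
  intro i hi
  interval_cases i
  simp [hsum_nil]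

lemma PP_hcons {n : ℕ} (hn : 1 ≤ n) {x : WStep} (hx : x.inc = 0) {t : List WStep}
    (ht : PP (n - 1) t) : PP n (x :: t) := by
  obtain ⟨hl, hs, hc⟩ := ht
  refine ⟨by simp [hl]; omega, by rw [hsum_cons, hx, hs]; ring, ?_⟩
  intro i hi
  cases i with
  | zero => simp [hsum_nil]
  | succ j =>
    rw [List.take_succ_cons, hsum_cons, hx]
    simpa using hc j (by omega)

lemma PP_upcons {n a b : ℕ} (hn : 1 ≤ n) (hab : a + b = n - 1) {q r : List WStep}
    (hq : PP a q) (hr : PP b r) : PP n (WStep.up :: (q ++ r)) := by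
  obtain ⟨hql, hqs, hqc⟩ := hq
  obtain ⟨hrl, hrs, hrc⟩ := hr
  refine ⟨by simp [hql, hrl]; omega,
    by rw [hsum_cons, hsum_append, hqs, hrs]; simp [WStep.inc], ?_⟩
  intro i hi
  cases i with
  | zero => simp [hsum_nil]
  | succ j =>
    rw [List.take_succ_cons, hsum_cons]
    have hju : WStep.up.inc = 1 := rfl
    rw [hju]
    rcases le_or_gt j a with hja | hja
    · rw [List.take_append_of_le_length (by omega)]
      rcases eq_or_lt_of_le hja with h | h
      · subst h
        rw [← hql, List.take_length, hqs]; norm_num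
      · have := hqc j h
        omega
    · have e1 : (q ++ r).take (q.length + (j - a)) = q ++ r.take (j - a) := by
        rw [List.take_add, List.take_left, List.drop_left]
      have h1 : (q ++ r).take j = q ++ r.take (j - a) := by
        rw [← e1]; congr 1; omega
      rw [h1, hsum_append, hqs]
      have := hrc (j - a) (by omega)
      omega

/-- the inverse (reconstruction) map -/
abbrev TT (n : ℕ) : Type :=
  {_u : Unit // n = 1} ⊕ (Fin 4 × DP (n - 1)) ⊕
    (Σ ab : Finset.HasAntidiagonal.antidiagonal (n - 1), DP (ab : ℕ × ℕ).1 × DP (ab : ℕ × ℕ).2)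

noncomputable def bwd (n : ℕ) (hn : 1 ≤ n) : TT n → DP n
  | .inl ⟨_, h⟩ => ⟨[WStep.down], h ▸ PP_down⟩
  | .inr (.inl (k, ⟨t, ht⟩)) => ⟨hstep k :: t, PP_hcons hn (hstep_inc k) ht⟩
  | .inr (.inr ⟨ab, ⟨q, hq⟩, ⟨r, hr⟩⟩) =>
      ⟨WStep.up :: (q ++ r),
        PP_upcons hn (Finset.HasAntidiagonal.mem_antidiagonal.mp ab.2) hq hr⟩

lemma split_eq {a a' b b' : ℕ} {q q' r r' : List WStep} (hq : PP a q) (hq' : PP a' q')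
    (hr : PP b r) (hr' : PP b' r') (h : q ++ r = q' ++ r') : a = a' ∧ q = q' ∧ r = r' := by
  have key : ∀ {a a' : ℕ} {q q' r r' : List WStep}, PP a q → PP a' q' → q ++ r = q' ++ r' →
      ¬ a < a' := by
    intro a a' q q' r r' hq hq' h hlt
    have h1 : hsum ((q ++ r).take a) = -1 := by
      rw [← hq.1, List.take_left, hq.2.1]
    have h2 : (q' ++ r').take a = q'.take a :=
      List.take_append_of_le_length (by have := hq'.1; omega)
    have h3 := hq'.2.2 a hlt
    rw [h, h2] at h1
    omega
  have haa : a = a' := by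
    rcases lt_trichotomy a a' with h1 | h1 | h1
    · exact absurd h1 (key hq hq' h)
    · exact h1
    · exact absurd h1 (key hq' hq h.symm)
  have hqq : q = q' := by
    have h1 := congrArg (List.take q.length) h
    rw [List.take_left] at h1
    have hlen : q'.length = q.length := by
      have := hq.1; have := hq'.1; omega
    rw [← hlen, List.take_left] at h1
    exact h1
  refine ⟨haa, hqq, ?_⟩
  rw [hqq] at h
  exact List.append_cancel_left h

lemma bwd_injective (n : ℕ) (hn : 1 ≤ n) : Function.Injective (bwd n hn) := by
  rintro (⟨⟨⟩, h1⟩ | ⟨k, t, ht⟩ | ⟨⟨⟨a, b⟩, hab⟩, ⟨q, hq⟩, ⟨r, hr⟩⟩)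
      (⟨⟨⟩, h1'⟩ | ⟨k', t', ht'⟩ | ⟨⟨⟨a', b'⟩, hab'⟩, ⟨q', hq'⟩, ⟨r', hr'⟩⟩) h <;>
    simp only [bwd, Subtype.mk.injEq, List.cons.injEq] at h
  · rfl
  · exfalso; have := h.1; revert this; fin_cases k' <;> simp [hstep]
  · exfalso; exact absurd h.1 (by decide)
  · exfalso; have := h.1; revert this; fin_cases k <;> simp [hstep]
  · obtain ⟨hk, htt⟩ := h
    have : k = k' := hstep_injective hk
    subst this; subst htt; rfl
  · exfalso; have := h.1; revert this; fin_cases k <;> simp [hstep]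
  · exfalso; exact absurd h.1 (by decide)
  · exfalso; have := h.1; revert this; fin_cases k' <;> simp [hstep]
  · obtain ⟨haa, hqq, hrr⟩ := split_eq hq hq' hr hr' h.2
    subst haa; subst hqq; subst hrr
    have hbb : b = b' := by
      have h1 : a + b = n - 1 := by simpa using Finset.HasAntidiagonal.mem_antidiagonal.mp hab
      have h2 : a + b' = n - 1 := by simpa using Finset.HasAntidiagonal.mem_antidiagonal.mp hab'
      omega
    subst hbb
    rfl

lemma bwd_surjective (n : ℕ) (hn : 1 ≤ n) : Function.Surjective (bwd n hn) := by
  rintro ⟨p, hp⟩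
  obtain ⟨hl, hs, hc⟩ := hp
  match p, hl with
  | [], hl => exact absurd hl (by simp; omega)
  | (x :: t), hl =>
    have hlt : t.length = n - 1 := by simp at hl; omega
    cases x with
    | down =>
      have hn1 : n = 1 := by
        by_contra hne
        have := hc 1 (by omega)
        rw [List.take_succ_cons, List.take_zero] at this
        simp [hsum, WStep.inc] at this
      have htnil : t = [] := by
        rw [← List.length_eq_zero_iff]; omega
      subst htnil
      exact ⟨.inl ⟨⟨⟩, hn1⟩, rfl⟩
    | up =>
      rw [hsum_cons] at hs
      have hsu : (WStep.up).inc = 1 := rfl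
      rw [hsu] at hs
      have hst : hsum t = -2 := by omega
      have hex : ∃ k, hsum (t.take k) = -1 := exists_hit t (-1) (by omega) (by norm_num)
      set a := Nat.find hex with hadef
      have ha : hsum (t.take a) = -1 := Nat.find_spec hex
      have hmin : ∀ k < a, hsum (t.take k) ≠ -1 := fun k hk => Nat.find_min hex hk
      have halen : a < t.length := by
        by_contra hcon
        rw [List.take_of_length_le (by omega)] at ha
        omega
      -- interior nonnegativity transferred to t
      have hct : ∀ i < t.length, -1 ≤ hsum (t.take i) := by
        intro i hi
        have := hc (i + 1) (by omega)
        rw [List.take_succ_cons, hsum_cons, hsu] at this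
        omega
      have hq : PP a (t.take a) := by
        refine ⟨by rw [List.length_take]; omega, ha, ?_⟩
        intro i hi
        rw [List.take_take, min_eq_left (by omega)]
        have h1 := hct i (by omega)
        have h2 := hmin i hi
        omega
      have hr : PP (n - 1 - a) (t.drop a) := by
        refine ⟨by rw [List.length_drop]; omega, ?_, ?_⟩
        · have := hsum_append (t.take a) (t.drop a)
          rw [List.take_append_drop] at this
          omega
        · intro i hi
          have hsplit : hsum (t.take (a + i)) = hsum (t.take a) + hsum ((t.drop a).take i) := by
            rw [List.take_add, hsum_append]
          have h1 := hct (a + i) (by omega)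
          have h2 : hsum (t.take (a+i)) ≠ -1 → True := fun _ => trivial
          -- need strict: hsum (t.take (a+i)) ≥ -1, ha = -1 ⟹ take i ≥ 0
          omega
      refine ⟨.inr (.inr ⟨⟨(a, n - 1 - a), Finset.HasAntidiagonal.mem_antidiagonal.mpr (by omega)⟩,
        ⟨t.take a, hq⟩, ⟨t.drop a, hr⟩⟩), ?_⟩
      simp only [bwd, Subtype.mk.injEq, List.take_append_drop]
    | h1 =>
      refine ⟨.inr (.inl (0, ⟨t, ?_⟩)), rfl⟩
      exact ⟨hlt, by rw [hsum_cons] at hs; simpa [WStep.inc] using hs,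
        fun i hi => by simpa [List.take_succ_cons, hsum_cons, WStep.inc] using hc (i+1) (by omega)⟩
    | h2 =>
      refine ⟨.inr (.inl (1, ⟨t, ?_⟩)), rfl⟩
      exact ⟨hlt, by rw [hsum_cons] at hs; simpa [WStep.inc] using hs,
        fun i hi => by simpa [List.take_succ_cons, hsum_cons, WStep.inc] using hc (i+1) (by omega)⟩
    | h3 =>
      refine ⟨.inr (.inl (2, ⟨t, ?_⟩)), rfl⟩
      exact ⟨hlt, by rw [hsum_cons] at hs; simpa [List.take_succ_cons, WStep.inc] using hs,
        fun i hi => by simpa [List.take_succ_cons, hsum_cons, WStep.inc] using hc (i+1) (by omega)⟩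
    | h4 =>
      refine ⟨.inr (.inl (3, ⟨t, ?_⟩)), rfl⟩
      exact ⟨hlt, by rw [hsum_cons] at hs; simpa [WStep.inc] using hs,
        fun i hi => by simpa [List.take_succ_cons, hsum_cons, WStep.inc] using hc (i+1) (by omega)⟩

lemma card_TT (n : ℕ) : Nat.card (TT n) =
    (if n = 1 then 1 else 0) + 4 * dnum (n - 1) +
      ∑ ab ∈ Finset.HasAntidiagonal.antidiagonal (n - 1), dnum ab.1 * dnum ab.2 := by
  classical
  have h1 : Nat.card {_u : Unit // n = 1} = if n = 1 then 1 else 0 := by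
    by_cases h : n = 1
    · have : Unique {_u : Unit // n = 1} := ⟨⟨⟨(), h⟩⟩, by rintro ⟨⟨⟩, _⟩; rfl⟩
      simp [h, Nat.card_unique]
    · have : IsEmpty {_u : Unit // n = 1} := ⟨fun u => h u.2⟩
      simp [h, Nat.card_of_isEmpty]
  have h2 : Nat.card (Fin 4 × DP (n - 1)) = 4 * dnum (n - 1) := by
    rw [Nat.card_prod, ← dnum_eq]
    simp [Nat.card_eq_fintype_card]
  have h3 : Nat.card (Σ ab : Finset.HasAntidiagonal.antidiagonal (n - 1), DP (ab : ℕ × ℕ).1 × DP (ab : ℕ × ℕ).2)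
      = ∑ ab ∈ Finset.HasAntidiagonal.antidiagonal (n - 1), dnum ab.1 * dnum ab.2 := by
    letI : ∀ ab : Finset.HasAntidiagonal.antidiagonal (n - 1), Fintype (DP (ab : ℕ × ℕ).1 × DP (ab : ℕ × ℕ).2) :=
      fun ab => Fintype.ofFinite _
    rw [Nat.card_eq_fintype_card, Fintype.card_sigma,
      ← Finset.sum_coe_sort (Finset.HasAntidiagonal.antidiagonal (n - 1)) (fun ab => dnum ab.1 * dnum ab.2)]
    exact Finset.sum_congr rfl fun ab _ => by
      rw [← Nat.card_eq_fintype_card, Nat.card_prod, ← dnum_eq, ← dnum_eq]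
  rw [show Nat.card (TT n) = Nat.card {_u : Unit // n = 1} +
      (Nat.card (Fin 4 × DP (n - 1)) +
        Nat.card (Σ ab : Finset.HasAntidiagonal.antidiagonal (n - 1),
          DP (ab : ℕ × ℕ).1 × DP (ab : ℕ × ℕ).2)) from by
    rw [← Nat.card_sum, ← Nat.card_sum]
  , h1, h2, h3]
  omega

lemma dnum_zero : dnum 0 = 0 := by
  rw [dnum_eq]
  have := DP_zero_empty
  exact Nat.card_of_isEmpty

lemma dnum_rec (n : ℕ) (hn : 1 ≤ n) :
    dnum n = (if n = 1 then 1 else 0) + 4 * dnum (n - 1) +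
      ∑ ab ∈ Finset.HasAntidiagonal.antidiagonal (n - 1), dnum ab.1 * dnum ab.2 := by
  rw [dnum_eq, ← Nat.card_eq_of_bijective (bwd n hn) ⟨bwd_injective n hn, bwd_surjective n hn⟩,
    card_TT]

theorem dnum_recurrence :
    (∀ n : ℕ, 1 ≤ n →
        dnum n = (if n = 1 then 1 else 0) + 4 * dnum (n - 1) +
          ∑ ab ∈ Finset.HasAntidiagonal.antidiagonal (n - 1), dnum ab.1 * dnum ab.2) ∧
      Dser = PowerSeries.X * (1 + 4 * Dser + Dser ^ 2) := by
  refine ⟨dnum_rec, ?_⟩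
  ext n
  cases n with
  | zero =>
    simp only [Dser, PowerSeries.coeff_mk, PowerSeries.coeff_zero_eq_constantCoeff, map_mul,
      PowerSeries.constantCoeff_X, zero_mul, dnum_zero, Nat.cast_zero]
  | succ m =>
    rw [PowerSeries.coeff_succ_X_mul]
    have hC : (4 : PowerSeries ℤ) = PowerSeries.C (R := ℤ) 4 := by
      rw [map_ofNat]
    rw [Dser, PowerSeries.coeff_mk, sq, map_add, map_add, PowerSeries.coeff_one, hC,
      PowerSeries.coeff_C_mul, PowerSeries.coeff_mk, PowerSeries.coeff_mul]
    simp only [PowerSeries.coeff_mk]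
    rw [dnum_rec (m + 1) (by omega)]
    have : m + 1 - 1 = m := rfl
    rw [this]
    push_cast
    rfl
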